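/- Let φ : R^p → R^s be continuously differentiable, Ω ⊆ R^s be closed, z̄ satisfy φ(z̄) ∈ Ω, and let d ∈ R^p satisfy ∇φ(z̄) d ∈ T_Ω(φ(z̄)). If the set-valued map z ⇉ −φ(z) + Ω is metrically subregular at (z̄, 0) in direction d, then d ∈ T_{φ^{-1}(Ω)}(z̄), where φ^{-1}(Ω) := {z : φ(z) ∈ Ω}. -/

import Mathlib

open Set Filter Topology Metric
open scoped RealInnerProductSpace Pointwise BigOperators

noncomputable section

/-- `R^n` as a Euclidean space. -/
abbrev Eu (n : ℕ) := EuclideanSpace ℝ (Fin n)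

/-- The directional neighborhood `V_{ε,δ}(d)` of the origin in direction `d`. -/
def dirNbhd {H : Type*} [NormedAddCommGroup H] [NormedSpace ℝ H] (d : H) (ε δ : ℝ) :
    Set H :=
  {z | z ∈ Metric.ball (0 : H) ε ∧
    (d = 0 ∨ z = 0 ∨ (z ≠ 0 ∧ ‖‖z‖⁻¹ • z - ‖d‖⁻¹ • d‖ ≤ δ))}

/-- The Fréchet (regular) normal cone to `Ω` at `z` (empty if `z ∉ Ω`). -/
def frechetNC {H : Type*} [NormedAddCommGroup H] [InnerProductSpace ℝ H]
    (Ω : Set H) (z : H) : Set H :=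
  {ζ | z ∈ Ω ∧ ∀ ε > 0, ∃ ρ > 0, ∀ z' ∈ Ω, ‖z' - z‖ < ρ → ⟪ζ, z' - z⟫ ≤ ε * ‖z' - z‖}

/-- The limiting (Mordukhovich) normal cone to `Ω` at `z`. -/
def limNC {H : Type*} [NormedAddCommGroup H] [InnerProductSpace ℝ H]
    (Ω : Set H) (z : H) : Set H :=
  {ζ | ∃ zs ζs : ℕ → H, Tendsto zs atTop (𝓝 z) ∧ Tendsto ζs atTop (𝓝 ζ) ∧
    ∀ k, ζs k ∈ frechetNC Ω (zs k)}

/-- The directional limiting normal cone to `Ω` at `z` in direction `d`. -/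
def dirNC {H : Type*} [NormedAddCommGroup H] [InnerProductSpace ℝ H]
    (Ω : Set H) (z d : H) : Set H :=
  {ζ | ∃ (t : ℕ → ℝ) (ds ζs : ℕ → H), (∀ k, 0 < t k) ∧ Tendsto t atTop (𝓝 0) ∧
    Tendsto ds atTop (𝓝 d) ∧ Tendsto ζs atTop (𝓝 ζ) ∧
    ∀ k, ζs k ∈ frechetNC Ω (z + t k • ds k)}

/-- The contingent (tangent) cone to `Ω` at `z`. -/
def tangentC {H : Type*} [NormedAddCommGroup H] [NormedSpace ℝ H]
    (Ω : Set H) (z : H) : Set H :=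
  {d | ∃ (t : ℕ → ℝ) (ds : ℕ → H), (∀ k, 0 < t k) ∧ Tendsto t atTop (𝓝 0) ∧
    Tendsto ds atTop (𝓝 d) ∧ ∀ k, z + t k • ds k ∈ Ω}

/-- The Fréchet normal cone for subsets of a product of inner product spaces,
with the canonical pairing `⟪ζ₁, w₁⟫ + ⟪ζ₂, w₂⟫`. -/
def frechetNCP {H K : Type*} [NormedAddCommGroup H] [InnerProductSpace ℝ H]
    [NormedAddCommGroup K] [InnerProductSpace ℝ K] (Ω : Set (H × K)) (z : H × K) :
    Set (H × K) :=
  {ζ | z ∈ Ω ∧ ∀ ε > 0, ∃ ρ > 0, ∀ z' ∈ Ω, ‖z' - z‖ < ρ →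
    ⟪ζ.1, z'.1 - z.1⟫ + ⟪ζ.2, z'.2 - z.2⟫ ≤ ε * ‖z' - z‖}

/-- The limiting normal cone for subsets of a product of inner product spaces. -/
def limNCP {H K : Type*} [NormedAddCommGroup H] [InnerProductSpace ℝ H]
    [NormedAddCommGroup K] [InnerProductSpace ℝ K] (Ω : Set (H × K)) (z : H × K) :
    Set (H × K) :=
  {ζ | ∃ zs ζs : ℕ → H × K, Tendsto zs atTop (𝓝 z) ∧ Tendsto ζs atTop (𝓝 ζ) ∧
    ∀ k, ζs k ∈ frechetNCP Ω (zs k)}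

/-- The directional limiting normal cone for subsets of a product space. -/
def dirNCP {H K : Type*} [NormedAddCommGroup H] [InnerProductSpace ℝ H]
    [NormedAddCommGroup K] [InnerProductSpace ℝ K] (Ω : Set (H × K)) (z d : H × K) :
    Set (H × K) :=
  {ζ | ∃ (t : ℕ → ℝ) (ds ζs : ℕ → H × K), (∀ k, 0 < t k) ∧ Tendsto t atTop (𝓝 0) ∧
    Tendsto ds atTop (𝓝 d) ∧ Tendsto ζs atTop (𝓝 ζ) ∧
    ∀ k, ζs k ∈ frechetNCP Ω (z + t k • ds k)}

/-- Directional metric subregularity of the set-valued map `Φ` at `(zbar, wbar)`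
in direction `d`. -/
def MetrSubregDir {H K : Type*} [NormedAddCommGroup H] [NormedSpace ℝ H]
    [PseudoMetricSpace K] (Φ : H → Set K) (zbar : H) (wbar : K) (d : H) : Prop :=
  ∃ ε > 0, ∃ δ > 0, ∃ κ > 0, ∀ z : H, z - zbar ∈ dirNbhd d ε δ →
    Metric.infDist z {z' | wbar ∈ Φ z'} ≤ κ * Metric.infDist wbar (Φ z)

/-- The lower-level solution map `S(x) = argmin_{y ∈ Y} f(x,y)`. -/
def Ssol {n m : ℕ} (Y : Set (EuclideanSpace ℝ (Fin m)))
    (f : EuclideanSpace ℝ (Fin n) → EuclideanSpace ℝ (Fin m) → ℝ)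
    (x : EuclideanSpace ℝ (Fin n)) : Set (EuclideanSpace ℝ (Fin m)) :=
  {y | y ∈ Y ∧ ∀ y' ∈ Y, f x y ≤ f x y'}

/-- The partial gradient `∇_y f(x,y)`. -/
def gradY {n m : ℕ} (f : EuclideanSpace ℝ (Fin n) → EuclideanSpace ℝ (Fin m) → ℝ)
    (x : EuclideanSpace ℝ (Fin n)) (y : EuclideanSpace ℝ (Fin m)) :
    EuclideanSpace ℝ (Fin m) :=
  gradient (f x) y

/-- The partial gradient `∇_x f(x,y)`. -/
def gradX {n m : ℕ} (f : EuclideanSpace ℝ (Fin n) → EuclideanSpace ℝ (Fin m) → ℝ)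
    (x : EuclideanSpace ℝ (Fin n)) (y : EuclideanSpace ℝ (Fin m)) :
    EuclideanSpace ℝ (Fin n) :=
  gradient (fun x' => f x' y) x

/-- The first-order (stationary) solution map
`S_FO(x) = {y ∈ Y : 0 ∈ ∇_y f(x,y) + N̂_Y(y)}`. -/
def SFO {n m : ℕ} (Y : Set (EuclideanSpace ℝ (Fin m)))
    (f : EuclideanSpace ℝ (Fin n) → EuclideanSpace ℝ (Fin m) → ℝ)
    (x : EuclideanSpace ℝ (Fin n)) : Set (EuclideanSpace ℝ (Fin m)) :=
  {y | y ∈ Y ∧ -gradY f x y ∈ frechetNC Y y}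

/-- The graph of the Fréchet normal cone map `y ⇉ N̂_Y(y)`. -/
def gphN {m : ℕ} (Y : Set (EuclideanSpace ℝ (Fin m))) :
    Set (EuclideanSpace ℝ (Fin m) × EuclideanSpace ℝ (Fin m)) :=
  {p | p.2 ∈ frechetNC Y p.1}

/-- `S` has a Lipschitz single-valued localization near `(xbar, ybar)`. -/
def HasLipLoc {n m : ℕ} (S : EuclideanSpace ℝ (Fin n) → Set (EuclideanSpace ℝ (Fin m)))
    (xbar : EuclideanSpace ℝ (Fin n)) (ybar : EuclideanSpace ℝ (Fin m)) : Prop :=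
  ∃ (U : Set (EuclideanSpace ℝ (Fin n))) (V : Set (EuclideanSpace ℝ (Fin m)))
    (s : EuclideanSpace ℝ (Fin n) → EuclideanSpace ℝ (Fin m)) (L : NNReal),
      IsOpen U ∧ xbar ∈ U ∧ IsOpen V ∧ ybar ∈ V ∧ LipschitzOnWith L s U ∧
      (∀ x ∈ U, s x ∈ V) ∧ ∀ x ∈ U, S x ∩ V = {s x}

/-- The inf-compactness condition at `xbar` relative to `ybar ∈ S(xbar)`. -/
def InfCompact {n m : ℕ} (Y : Set (EuclideanSpace ℝ (Fin m)))
    (f : EuclideanSpace ℝ (Fin n) → EuclideanSpace ℝ (Fin m) → ℝ)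
    (xbar : EuclideanSpace ℝ (Fin n)) (ybar : EuclideanSpace ℝ (Fin m)) : Prop :=
  ∃ (C : Set (EuclideanSpace ℝ (Fin m))) (α : ℝ) (U : Set (EuclideanSpace ℝ (Fin n))),
    IsCompact C ∧ f xbar ybar < α ∧ U ∈ 𝓝 xbar ∧
    (∀ x ∈ U, {y | y ∈ Y ∧ f x y ≤ α} ⊆ C) ∧ ∀ x ∈ U, (Ssol Y f x).Nonempty

/-- directional metric subregularity implies that directions in the
linearized cone are tangent to the feasible set. -/
theorem stmt16 {p s : ℕ} (φ : Eu p → Eu s) (hφ : ContDiff ℝ 1 φ)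
    (Ω : Set (Eu s)) (hΩ : IsClosed Ω) (zbar : Eu p) (hzbar : φ zbar ∈ Ω)
    (d : Eu p) (hd : fderiv ℝ φ zbar d ∈ tangentC Ω (φ zbar))
    (hsubreg : MetrSubregDir (fun z : Eu p => {w : Eu s | w + φ z ∈ Ω}) zbar 0 d) :
    d ∈ tangentC (φ ⁻¹' Ω) zbar := by
  obtain ⟨ε, hε, δ, hδ, κ, hκ, hsub⟩ := hsubreg
  obtain ⟨t, w, ht, ht0, hw, hmem⟩ := hd
  set A := fderiv ℝ φ zbar with hA
  -- the feasible set
  set Sf : Set (Eu p) := φ ⁻¹' Ω with hSf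
  have hSclosed : IsClosed Sf := hΩ.preimage (hφ.continuous)
  have hSne : Sf.Nonempty := ⟨zbar, hzbar⟩
  -- derivative of τ ↦ φ (zbar + τ • d) at 0
  have hder : HasDerivAt (fun τ : ℝ => φ (zbar + τ • d)) (A d) 0 := by
    have h1 : HasDerivAt (fun τ : ℝ => zbar + τ • d) d 0 := by
      simpa using ((hasDerivAt_id (0 : ℝ)).smul_const d).const_add zbar
    have h2 : HasFDerivAt φ A (zbar + (0 : ℝ) • d) := by
      simpa using (hφ.differentiable one_ne_zero zbar).hasFDerivAt
    exact h2.comp_hasDerivAt 0 h1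
  have hslope : Tendsto (fun k => slope (fun τ : ℝ => φ (zbar + τ • d)) 0 (t k))
      atTop (𝓝 (A d)) := by
    have h := hasDerivAt_iff_tendsto_slope.1 hder
    exact h.comp (tendsto_nhdsWithin_iff.2
      ⟨ht0, Eventually.of_forall fun k => (ht k).ne'⟩)
  set e : ℕ → Eu s := fun k =>
    slope (fun τ : ℝ => φ (zbar + τ • d)) 0 (t k) - w k with he
  have he0 : Tendsto e atTop (𝓝 0) := by
    simpa using hslope.sub hw
  -- φ(zbar + t k • d) - φ zbar - t k • w k = t k • e k
  have hkey : ∀ k, φ (zbar + t k • d) - (φ zbar + t k • w k) = t k • e k := by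
    intro k
    have htk : (t k : ℝ) ≠ 0 := (ht k).ne'
    have h : t k • e k = (φ (zbar + t k • d) - φ (zbar + (0:ℝ) • d)) - t k • w k := by
      simp only [he, slope, sub_zero, vsub_eq_sub, smul_sub, smul_inv_smul₀ htk]
    rw [h, zero_smul, add_zero]
    abel
  -- the distance bound, eventually
  have hball : ∀ᶠ k in atTop, t k * ‖d‖ < ε := by
    have : Tendsto (fun k => t k * ‖d‖) atTop (𝓝 (0 * ‖d‖)) := ht0.mul_const _
    rw [zero_mul] at this
    exact this.eventually (eventually_lt_nhds hε)
  have hbound : ∀ᶠ k in atTop,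
      Metric.infDist (zbar + t k • d) Sf ≤ κ * (t k * ‖e k‖) := by
    filter_upwards [hball] with k hk
    have htk : (t k : ℝ) ≠ 0 := (ht k).ne'
    -- membership in the directional neighborhood
    have hdir : (zbar + t k • d) - zbar ∈ dirNbhd d ε δ := by
      have hz : (zbar + t k • d) - zbar = t k • d := by abel
      rw [hz]
      constructor
      · rw [Metric.mem_ball, dist_zero_right, norm_smul, Real.norm_eq_abs,
          abs_of_pos (ht k)]
        exact hk
      · rcases eq_or_ne d 0 with hd0 | hd0
        · exact Or.inl hd0
        · refine Or.inr (Or.inr ⟨smul_ne_zero htk hd0, ?_⟩)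
          have : ‖t k • d‖⁻¹ • t k • d = ‖d‖⁻¹ • d := by
            rw [norm_smul, Real.norm_eq_abs, abs_of_pos (ht k), mul_inv,
              smul_smul, mul_comm ((t k)⁻¹) (‖d‖⁻¹), mul_assoc,
              inv_mul_cancel₀ htk, mul_one]
          rw [this, sub_self, norm_zero]
          exact le_of_lt hδ
    have hs := hsub (zbar + t k • d) hdir
    -- the preimage set is Sf
    have hset : {z' : Eu p | (0 : Eu s) ∈ {w : Eu s | w + φ z' ∈ Ω}} = Sf := by
      ext z'; simp [hSf]
    rw [hset] at hs
    -- bound infDist 0 (Φ (zbar + t k • d))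
    have hv : Metric.infDist (0 : Eu s) {w' : Eu s | w' + φ (zbar + t k • d) ∈ Ω}
        ≤ t k * ‖e k‖ := by
      have hmem' : (φ zbar + t k • w k) - φ (zbar + t k • d)
          ∈ {w' : Eu s | w' + φ (zbar + t k • d) ∈ Ω} := by
        simp only [Set.mem_setOf_eq, sub_add_cancel]
        exact hmem k
      refine le_trans (Metric.infDist_le_dist_of_mem hmem') ?_
      rw [dist_zero_left]
      have : (φ zbar + t k • w k) - φ (zbar + t k • d) = -(t k • e k) := by
        rw [← hkey k]; abel
      rw [this, norm_neg, norm_smul, Real.norm_eq_abs, abs_of_pos (ht k)]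
    calc Metric.infDist (zbar + t k • d) Sf
        ≤ κ * Metric.infDist (0 : Eu s) {w' : Eu s | w' + φ (zbar + t k • d) ∈ Ω} := hs
      _ ≤ κ * (t k * ‖e k‖) := by
          exact mul_le_mul_of_nonneg_left hv (le_of_lt hκ)
  obtain ⟨N, hN⟩ := eventually_atTop.1 hbound
  -- shift indices by N
  set T : ℕ → ℝ := fun k => t (k + N) with hT
  have hTpos : ∀ k, 0 < T k := fun k => ht _
  have hT0 : Tendsto T atTop (𝓝 0) := ht0.comp (tendsto_add_atTop_nat N)
  have hE0 : Tendsto (fun k => e (k + N)) atTop (𝓝 0) :=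
    he0.comp (tendsto_add_atTop_nat N)
  -- choose nearest points in Sf
  have hproj : ∀ k : ℕ, ∃ u ∈ Sf,
      Metric.infDist (zbar + T k • d) Sf = dist (zbar + T k • d) u :=
    fun k => hSclosed.exists_infDist_eq_dist hSne _
  choose u hu hud using hproj
  have hudist : ∀ k, ‖u k - (zbar + T k • d)‖ ≤ κ * (T k * ‖e (k + N)‖) := by
    intro k
    have := hN (k + N) (Nat.le_add_left N k)
    rw [hud k, dist_eq_norm, ← norm_neg] at this
    simpa [neg_sub] using this
  -- the tangent directions
  refine ⟨T, fun k => d + (T k)⁻¹ • (u k - (zbar + T k • d)), hTpos, hT0, ?_, ?_⟩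
  · -- convergence to d
    rw [show (𝓝 d) = 𝓝 (d + 0) by rw [add_zero]]
    refine Tendsto.const_add d ?_
    have hnorm : Tendsto (fun k => ‖(T k)⁻¹ • (u k - (zbar + T k • d))‖)
        atTop (𝓝 0) := by
      have hle : ∀ k, ‖(T k)⁻¹ • (u k - (zbar + T k • d))‖ ≤ κ * ‖e (k + N)‖ := by
        intro k
        rw [norm_smul, Real.norm_eq_abs, abs_of_pos (inv_pos.2 (hTpos k))]
        calc (T k)⁻¹ * ‖u k - (zbar + T k • d)‖
            ≤ (T k)⁻¹ * (κ * (T k * ‖e (k + N)‖)) := by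
              exact mul_le_mul_of_nonneg_left (hudist k)
                (le_of_lt (inv_pos.2 (hTpos k)))
          _ = κ * ‖e (k + N)‖ := by
              have htk : T k ≠ 0 := (hTpos k).ne'
              field_simp
      have hg : Tendsto (fun k => κ * ‖e (k + N)‖) atTop (𝓝 0) := by
        have := (hE0.norm).const_mul κ
        simpa using this
      exact squeeze_zero (fun k => norm_nonneg _) hle hg
    exact tendsto_zero_iff_norm_tendsto_zero.2 hnorm
  · -- membership
    intro k
    have htk : (T k : ℝ) ≠ 0 := (hTpos k).ne'
    have heq : zbar + T k • (d + (T k)⁻¹ • (u k - (zbar + T k • d))) = u k := by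
      rw [smul_add, smul_inv_smul₀ htk]
      abel
    show zbar + T k • (d + (T k)⁻¹ • (u k - (zbar + T k • d))) ∈ φ ⁻¹' Ω
    rw [heq]
    exact hu k
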